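/- For all n ≥ k ≥ 0: ∑_{i=0}^{n} ∑_{j=0}^{k} C(n,i)·Â(i,j+1)·Â(n−i,k−j+1) = (n+1−k)·Â(n,k+1) + (k+1)·Â(n,k+2), where Â(m,r) is the number of permutations of [m] with exactly r−1 alternating descents (with Â(0,1)=1 and Â(m,r)=0 for r ≤ 0 or r > max(m,1)). -/

import Mathlib

open Finset
open scoped Classical
set_option maxHeartbeats 1000000

/-- entry of a permutation of `Fin n` at 0-indexed position `i` (0-based values). -/
def ent {n : ℕ} (σ : Equiv.Perm (Fin n)) (i : ℕ) : ℕ :=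
  if h : i < n then (σ ⟨i, h⟩ : ℕ) else 0

/-- the triple `(a, b, c)` of distinct values, reduced to a permutation in `S₃`, is odd. -/
def odd3 (a b c : ℕ) : Prop :=
  ((if b < a then 1 else 0) + (if c < a then 1 else 0) + (if c < b then 1 else 0)) % 2 = 1

instance (a b c : ℕ) : Decidable (odd3 a b c) := by
  unfold odd3; infer_instance

/-- 3-descent set, 0-indexed positions (position `i` here is paper position `i+1`). -/
def D3 {n : ℕ} (σ : Equiv.Perm (Fin n)) : Finset ℕ :=
  (Finset.range (n - 2)).filter (fun i => odd3 (ent σ i) (ent σ (i + 1)) (ent σ (i + 2)))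

/-- alternating descent set, 0-indexed positions. -/
def altD {n : ℕ} (σ : Equiv.Perm (Fin n)) : Finset ℕ :=
  (Finset.range (n - 1)).filter (fun i =>
    (Even i ∧ ent σ (i + 1) < ent σ i) ∨ (¬ Even i ∧ ent σ i < ent σ (i + 1)))

/-- number of up-down alternating permutations of `[n]` (the Euler number `Eₙ`). -/
noncomputable def EulerNum (n : ℕ) : ℕ :=
  ((Finset.univ : Finset (Equiv.Perm (Fin n))).filter (fun τ =>
    ∀ i ∈ Finset.range (n - 1),
      (Even i ∧ ent τ i < ent τ (i + 1)) ∨ (¬ Even i ∧ ent τ (i + 1) < ent τ i))).card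

/-- `c³ᵢ(σ)`, 0-indexed: number of `j > i+1` with `σᵢ σᵢ₊₁ σⱼ` odd. -/
def c3 {n : ℕ} (σ : Equiv.Perm (Fin n)) (i : ℕ) : ℕ :=
  ((Finset.range n).filter (fun j => i + 1 < j ∧ odd3 (ent σ i) (ent σ (i + 1)) (ent σ j))).card

/-- `ĉᵢ(σ)`, 0-indexed. -/
def chat {n : ℕ} (σ : Equiv.Perm (Fin n)) (i : ℕ) : ℕ :=
  ((Finset.range n).filter (fun j => i < j ∧
    ((Even i ∧ ent σ j < ent σ i) ∨ (¬ Even i ∧ ent σ i < ent σ j)))).card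

/-- `i₃` of an arbitrary word `f 0, f 1, ..., f (m-1)`. -/
def i3f (m : ℕ) (f : ℕ → ℕ) : ℕ :=
  ((Finset.range m ×ˢ Finset.range m).filter (fun p =>
    p.1 + 1 < p.2 ∧ odd3 (f p.1) (f (p.1 + 1)) (f p.2))).card

/-- the 3-inversion statistic `i₃`. -/
def i3 {n : ℕ} (σ : Equiv.Perm (Fin n)) : ℕ := i3f n (ent σ)

/-- the word `1*σ` (0-based values): `0, σ₀+1, σ₁+1, ...`. -/
def oneStar {n : ℕ} (σ : Equiv.Perm (Fin n)) : ℕ → ℕ :=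
  fun i => if i = 0 then 0 else ent σ (i - 1) + 1

/-- number of alternating inversions `î(σ)`. -/
def altInv {n : ℕ} (σ : Equiv.Perm (Fin n)) : ℕ :=
  ((Finset.range n ×ˢ Finset.range n).filter (fun p => p.1 < p.2 ∧
    ((Even p.1 ∧ ent σ p.2 < ent σ p.1) ∨ (¬ Even p.1 ∧ ent σ p.1 < ent σ p.2)))).card

/-- number of inversions of the word `f 0, ..., f (m-1)`. -/
def invf (m : ℕ) (f : ℕ → ℕ) : ℕ :=
  ((Finset.range m ×ˢ Finset.range m).filter (fun p => p.1 < p.2 ∧ f p.2 < f p.1)).card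

/-- major index of the word `f 0, ..., f (m-1)` (descent at 0-indexed `i` contributes `i+1`). -/
def majf (m : ℕ) (f : ℕ → ℕ) : ℕ :=
  ∑ i ∈ (Finset.range (m - 1)).filter (fun i => f (i + 1) < f i), (i + 1)

/-- `Â(m, r)`: number of permutations of `[m]` with `r - 1` alternating descents. -/
def Ahat (m r : ℕ) : ℕ :=
  ((Finset.univ : Finset (Equiv.Perm (Fin m))).filter (fun σ => (altD σ).card + 1 = r)).card

/-- down-up alternating: `σ₁ > σ₂ < σ₃ > ⋯`. -/
def DownUp {n : ℕ} (σ : Equiv.Perm (Fin n)) : Prop :=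
  ∀ i ∈ Finset.range (n - 1),
    (Even i ∧ ent σ (i + 1) < ent σ i) ∨ (¬ Even i ∧ ent σ i < ent σ (i + 1))

instance {n : ℕ} (σ : Equiv.Perm (Fin n)) : Decidable (DownUp σ) := by
  unfold DownUp; infer_instance

/-- up-down alternating: `σ₁ < σ₂ > σ₃ < ⋯`. -/
def UpDown {n : ℕ} (σ : Equiv.Perm (Fin n)) : Prop :=
  ∀ i ∈ Finset.range (n - 1),
    (Even i ∧ ent σ i < ent σ (i + 1)) ∨ (¬ Even i ∧ ent σ (i + 1) < ent σ i)

namespace Glue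
variable {n i : ℕ}

def wperm (i : ℕ) {m : ℕ} (τ : Equiv.Perm (Fin m)) : Equiv.Perm (Fin m) :=
  if Even i then τ else τ.trans Fin.revPerm

lemma wperm_def (i : ℕ) {m : ℕ} (τ : Equiv.Perm (Fin m)) :
    wperm i τ = if Even i then τ else τ.trans Fin.revPerm := rfl

lemma card_compl' {A : Finset (Fin n)} (hA : A.card = i) : Aᶜ.card = n - i := by
  rw [Finset.card_compl, hA, Fintype.card_fin]

lemma i_le_n {A : Finset (Fin n)} (hA : A.card = i) : i ≤ n := by
  simpa [hA] using Finset.card_le_univ A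

def glueFun (A : Finset (Fin n)) (hA : A.card = i) (σ : Equiv.Perm (Fin i))
    (τ : Equiv.Perm (Fin (n - i))) : Fin n → Fin n :=
  fun m => if h : (m : ℕ) < i then ((A.orderIsoOfFin hA) (σ ⟨m, h⟩) : Fin n)
    else ((Aᶜ.orderIsoOfFin (card_compl' hA)) ((wperm i τ) ⟨(m : ℕ) - i,
      by have := m.isLt; omega⟩) : Fin n)

lemma glueFun_injective (A : Finset (Fin n)) (hA : A.card = i) (σ : Equiv.Perm (Fin i))
    (τ : Equiv.Perm (Fin (n - i))) : Function.Injective (glueFun A hA σ τ) := by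
  intro m m' hmm
  unfold glueFun at hmm
  by_cases h : (m : ℕ) < i <;> by_cases h' : (m' : ℕ) < i
  · rw [dif_pos h, dif_pos h'] at hmm
    have := (A.orderIsoOfFin hA).injective (Subtype.coe_injective hmm)
    have := σ.injective this
    exact Fin.ext (by simpa [Fin.ext_iff] using this)
  · rw [dif_pos h, dif_neg h'] at hmm
    have h1 : ((A.orderIsoOfFin hA) (σ ⟨m, h⟩) : Fin n) ∈ A := ((A.orderIsoOfFin hA) _).2
    have h2 := ((Aᶜ.orderIsoOfFin (card_compl' hA)) ((wperm i τ) ⟨(m' : ℕ) - i,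
      by have := m'.isLt; omega⟩)).2
    rw [hmm] at h1
    exact absurd h1 (Finset.mem_compl.mp h2)
  · rw [dif_neg h, dif_pos h'] at hmm
    have h1 : ((A.orderIsoOfFin hA) (σ ⟨m', h'⟩) : Fin n) ∈ A := ((A.orderIsoOfFin hA) _).2
    have h2 := ((Aᶜ.orderIsoOfFin (card_compl' hA)) ((wperm i τ) ⟨(m : ℕ) - i,
      by have := m.isLt; omega⟩)).2
    rw [← hmm] at h1
    exact absurd h1 (Finset.mem_compl.mp h2)
  · rw [dif_neg h, dif_neg h'] at hmm
    have := (Aᶜ.orderIsoOfFin (card_compl' hA)).injective (Subtype.coe_injective hmm)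
    have := (wperm i τ).injective this
    have : (m : ℕ) - i = (m' : ℕ) - i := by simpa [Fin.ext_iff] using this
    exact Fin.ext (by omega)

noncomputable def glue (A : Finset (Fin n)) (hA : A.card = i) (σ : Equiv.Perm (Fin i))
    (τ : Equiv.Perm (Fin (n - i))) : Equiv.Perm (Fin n) :=
  Equiv.ofBijective _ (Finite.injective_iff_bijective.mp (glueFun_injective A hA σ τ))

lemma ent_glue_lt (A : Finset (Fin n)) (hA : A.card = i) (σ : Equiv.Perm (Fin i))
    (τ : Equiv.Perm (Fin (n - i))) {m : ℕ} (h : m < i) :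
    ent (glue A hA σ τ) m = ((A.orderIsoOfFin hA) (σ ⟨m, h⟩) : Fin n) := by
  have hn : m < n := lt_of_lt_of_le h (i_le_n hA)
  simp only [ent, dif_pos hn, glue, Equiv.ofBijective_apply, glueFun, dif_pos h]

lemma ent_glue_ge (A : Finset (Fin n)) (hA : A.card = i) (σ : Equiv.Perm (Fin i))
    (τ : Equiv.Perm (Fin (n - i))) {m : ℕ} (h : i ≤ m) (hn : m < n) :
    ent (glue A hA σ τ) m =
      ((Aᶜ.orderIsoOfFin (card_compl' hA)) ((wperm i τ) ⟨m - i, by omega⟩) : Fin n) := by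
  simp only [ent, dif_pos hn, glue, Equiv.ofBijective_apply, glueFun, dif_neg (not_lt.mpr h)]


lemma ent_lt_ent {m : ℕ} (ρ : Equiv.Perm (Fin m)) {a b : ℕ} (ha : a < m) (hb : b < m) :
    ent ρ a < ent ρ b ↔ ρ ⟨a, ha⟩ < ρ ⟨b, hb⟩ := by
  simp only [ent, dif_pos ha, dif_pos hb]
  exact Fin.lt_def.symm

variable {A : Finset (Fin n)} (hA : A.card = i) (σ : Equiv.Perm (Fin i))
    (τ : Equiv.Perm (Fin (n - i)))

lemma block1_lt {m m' : ℕ} (h : m < i) (h' : m' < i) :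
    (ent (glue A hA σ τ) m < ent (glue A hA σ τ) m') ↔ σ ⟨m, h⟩ < σ ⟨m', h'⟩ := by
  rw [ent_glue_lt A hA σ τ h, ent_glue_lt A hA σ τ h', ← Fin.lt_def,
    Subtype.coe_lt_coe, OrderIso.lt_iff_lt]

lemma block2_lt {m m' : ℕ} (h : i ≤ m) (hn : m < n) (h' : i ≤ m') (hn' : m' < n) :
    (ent (glue A hA σ τ) m < ent (glue A hA σ τ) m') ↔
      (wperm i τ) ⟨m - i, by omega⟩ < (wperm i τ) ⟨m' - i, by omega⟩ := by
  rw [ent_glue_ge A hA σ τ h hn, ent_glue_ge A hA σ τ h' hn', ← Fin.lt_def,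
    Subtype.coe_lt_coe, OrderIso.lt_iff_lt]

lemma block2_lt' {m m' a b : ℕ} (h : i ≤ m) (hn : m < n) (h' : i ≤ m') (hn' : m' < n)
    (ham : m - i = a) (hbm : m' - i = b) (haa : a < n - i) (hbb : b < n - i) :
    (ent (glue A hA σ τ) m < ent (glue A hA σ τ) m') ↔
      (wperm i τ) ⟨a, haa⟩ < (wperm i τ) ⟨b, hbb⟩ := by
  subst ham hbm
  exact block2_lt hA σ τ h hn h' hn'

lemma altD_glue_filter_lt :
    (altD (glue A hA σ τ)).filter (fun j => j + 1 < i) = altD σ := by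
  ext j
  simp only [altD, Finset.mem_filter, Finset.mem_range]
  constructor
  · rintro ⟨⟨hj, hc⟩, hji⟩
    refine ⟨by omega, ?_⟩
    rw [ent_lt_ent σ (by omega) (by omega), ent_lt_ent σ (by omega) (by omega),
      ← block1_lt hA σ τ (by omega) (by omega), ← block1_lt hA σ τ (by omega) (by omega)]
    exact hc
  · rintro ⟨hj, hc⟩
    have hin := i_le_n hA
    refine ⟨⟨by omega, ?_⟩, by omega⟩
    rw [block1_lt hA σ τ (m := j) (by omega) (by omega),
      block1_lt hA σ τ (m := j + 1) (by omega) (by omega),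
      ← ent_lt_ent σ (by omega) (by omega), ← ent_lt_ent σ (by omega) (by omega)]
    exact hc

lemma cond_block2 {j : ℕ} (hj : i ≤ j) (hjn : j + 1 < n) :
    ((Even j ∧ ent (glue A hA σ τ) (j + 1) < ent (glue A hA σ τ) j) ∨
      (¬ Even j ∧ ent (glue A hA σ τ) j < ent (glue A hA σ τ) (j + 1))) ↔
    ((Even (j - i) ∧ ent τ (j - i + 1) < ent τ (j - i)) ∨
      (¬ Even (j - i) ∧ ent τ (j - i) < ent τ (j - i + 1))) := by
  have hin := i_le_n hA
  have e1 := block2_lt' hA σ τ (m := j) (m' := j + 1) (a := j - i) (b := j - i + 1)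
    hj (by omega) (by omega) hjn rfl (by omega) (by omega) (by omega)
  have e2 := block2_lt' hA σ τ (m := j + 1) (m' := j) (a := j - i + 1) (b := j - i)
    (by omega) hjn hj (by omega) (by omega) rfl (by omega) (by omega)
  have et1 := ent_lt_ent τ (a := j - i) (b := j - i + 1) (by omega) (by omega)
  have et2 := ent_lt_ent τ (a := j - i + 1) (b := j - i) (by omega) (by omega)
  rw [e1, e2, et1, et2]
  have hps := Nat.even_sub hj
  by_cases hi : Even i
  · have hw : ∀ x, wperm i τ x = τ x := fun x => by rw [wperm_def, if_pos hi]
    have hpar : Even j ↔ Even (j - i) :=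
      ⟨fun h => hps.mpr (iff_of_true h hi), fun h => (hps.mp h).mpr hi⟩
    simp only [hw]
    rw [hpar]
  · have hw : ∀ x, wperm i τ x = Fin.rev (τ x) := fun x => by
      rw [wperm_def, if_neg hi, Equiv.trans_apply, Fin.revPerm_apply]
    have hpar : Even j ↔ ¬ Even (j - i) := by
      constructor
      · intro h hE'
        exact hi ((hps.mp hE').mp h)
      · intro h
        by_contra hj
        exact h (hps.mpr (iff_of_false hj hi))
    simp only [hw, Fin.rev_lt_rev]
    rw [hpar, not_not]
    exact or_comm

lemma altD_glue_filter_gt :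
    (altD (glue A hA σ τ)).filter (fun j => i < j + 1) = (altD τ).image (· + i) := by
  have hin := i_le_n hA
  ext j
  simp only [altD, Finset.mem_filter, Finset.mem_range, Finset.mem_image]
  constructor
  · rintro ⟨⟨hj, hc⟩, hji⟩
    refine ⟨j - i, ⟨⟨by omega, ?_⟩, by omega⟩⟩
    exact (cond_block2 hA σ τ (by omega) (by omega)).mp hc
  · rintro ⟨j', ⟨⟨hj', hc⟩, rfl⟩⟩
    have hji : j' + i - i = j' := by omega
    refine ⟨⟨by omega, ?_⟩, by omega⟩
    rw [cond_block2 hA σ τ (by omega) (by omega), hji]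
    exact hc

lemma altD_glue_card :
    (altD (glue A hA σ τ)).card = (altD σ).card + (altD τ).card +
      (if 1 ≤ i ∧ i - 1 ∈ altD (glue A hA σ τ) then 1 else 0) := by
  set Φ := glue A hA σ τ with hΦ
  have h3 := Finset.card_filter_add_card_filter_not
    (s := altD Φ) (p := fun j => j + 1 < i)
  have h4 := Finset.card_filter_add_card_filter_not
    (s := (altD Φ).filter (fun j => ¬ (j + 1 < i))) (p := fun j => j + 1 = i)
  rw [Finset.filter_filter, Finset.filter_filter] at h4
  have e1 : (Finset.filter (fun j => ¬(j + 1 < i) ∧ j + 1 = i) (altD Φ)) =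
      (altD Φ).filter (fun j => j + 1 = i) := by
    apply Finset.filter_congr; intro x _; constructor
    · rintro ⟨_, h⟩; exact h
    · intro h; exact ⟨by omega, h⟩
  have e2 : (Finset.filter (fun j => ¬(j + 1 < i) ∧ ¬(j + 1 = i)) (altD Φ)) =
      (altD Φ).filter (fun j => i < j + 1) := by
    apply Finset.filter_congr; intro x _; constructor
    · rintro ⟨h1, h2⟩; omega
    · intro h; omega
  have e3 : ((altD Φ).filter (fun j => j + 1 = i)).card =
      (if 1 ≤ i ∧ i - 1 ∈ altD Φ then 1 else 0) := by
    split_ifs with h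
    · rw [show (altD Φ).filter (fun j => j + 1 = i) = {i - 1} from ?_]
      · exact Finset.card_singleton _
      · ext a
        simp only [Finset.mem_filter, Finset.mem_singleton]
        constructor
        · rintro ⟨_, h2⟩; omega
        · rintro rfl; exact ⟨h.2, by omega⟩
    · rw [show (altD Φ).filter (fun j => j + 1 = i) = ∅ from ?_]
      · exact Finset.card_empty
      · rw [Finset.eq_empty_iff_forall_notMem]
        intro a ha
        rw [Finset.mem_filter] at ha
        exact h ⟨by omega, by rw [show i - 1 = a by omega]; exact ha.1⟩
  rw [e1, e2, e3] at h4
  rw [altD_glue_filter_lt hA σ τ] at h3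
  rw [altD_glue_filter_gt hA σ τ,
    Finset.card_image_of_injective _ (add_left_injective i)] at h4
  omega


lemma glue_apply_lt' (m : Fin n) (h : (m : ℕ) < i) :
    glue A hA σ τ m = ((A.orderIsoOfFin hA) (σ ⟨(m : ℕ), h⟩) : Fin n) := by
  simp only [glue, Equiv.ofBijective_apply, glueFun, dif_pos h]

lemma glue_apply_ge' (m : Fin n) {a : ℕ} (h : i ≤ (m : ℕ)) (hva : (m : ℕ) - i = a)
    (ha : a < n - i) :
    glue A hA σ τ m = ((Aᶜ.orderIsoOfFin (card_compl' hA)) ((wperm i τ) ⟨a, ha⟩) : Fin n) := by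
  subst hva
  simp only [glue, Equiv.ofBijective_apply, glueFun, dif_neg (not_lt.mpr h)]

lemma wperm_wperm {m : ℕ} (ρ : Equiv.Perm (Fin m)) : wperm i (wperm i ρ) = ρ := by
  rw [wperm_def, wperm_def]
  split_ifs with h
  · rfl
  · apply Equiv.ext; intro x
    simp only [Equiv.trans_apply, Fin.revPerm_apply, Fin.rev_rev]

lemma glue_image :
    Finset.image (fun m : Fin i => glue A hA σ τ (Fin.castLE (i_le_n hA) m)) Finset.univ
      = A := by
  apply Finset.eq_of_subset_of_card_le
  · intro x hx
    rw [Finset.mem_image] at hx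
    obtain ⟨m, _, rfl⟩ := hx
    rw [glue_apply_lt' hA σ τ _ (by simpa using m.isLt)]
    exact ((A.orderIsoOfFin hA) _).2
  · have hinj : Function.Injective
        (fun m : Fin i => glue A hA σ τ (Fin.castLE (i_le_n hA) m)) :=
      fun a b hab => Fin.castLE_injective _ ((glue A hA σ τ).injective hab)
    rw [Finset.card_image_of_injective _ hinj, Finset.card_univ, Fintype.card_fin, hA]

lemma glue_inj {A A' : Finset (Fin n)} {hA : A.card = i} {hA' : A'.card = i}
    {σ σ' : Equiv.Perm (Fin i)} {τ τ' : Equiv.Perm (Fin (n - i))}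
    (h : glue A hA σ τ = glue A' hA' σ' τ') : A = A' ∧ σ = σ' ∧ τ = τ' := by
  have hAA : A = A' := by
    have h1 := glue_image hA σ τ
    have h2 := glue_image hA' σ' τ'
    rw [← h1, ← h2, h]
  subst hAA
  have hhe : hA = hA' := Subsingleton.elim _ _
  subst hhe
  refine ⟨rfl, ?_, ?_⟩
  · apply Equiv.ext; intro m
    have hm : ((Fin.castLE (i_le_n hA) m : Fin n) : ℕ) < i := by simpa using m.isLt
    have e1 := glue_apply_lt' hA σ τ (Fin.castLE (i_le_n hA) m) hm
    have e2 := glue_apply_lt' hA σ' τ' (Fin.castLE (i_le_n hA) m) hm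
    rw [h] at e1
    have h3 := (A.orderIsoOfFin hA).injective (Subtype.coe_injective (e1.symm.trans e2))
    have hmm : (⟨((Fin.castLE (i_le_n hA) m : Fin n) : ℕ), hm⟩ : Fin i) = m := by
      apply Fin.ext; simp
    rw [hmm] at h3
    exact h3
  · have key : ∀ x : Fin (n - i), wperm i τ x = wperm i τ' x := by
      intro x
      have hin := i_le_n hA
      have hx2 : i + (x : ℕ) < n := by have := x.isLt; omega
      have hge : i ≤ ((⟨i + (x : ℕ), hx2⟩ : Fin n) : ℕ) := Nat.le_add_right i x
      have hva : ((⟨i + (x : ℕ), hx2⟩ : Fin n) : ℕ) - i = (x : ℕ) := by simp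
      have e1 := glue_apply_ge' hA σ τ ⟨i + (x : ℕ), hx2⟩ hge hva x.isLt
      have e2 := glue_apply_ge' hA σ' τ' ⟨i + (x : ℕ), hx2⟩ hge hva x.isLt
      rw [h] at e1
      have h3 := (Aᶜ.orderIsoOfFin (card_compl' hA)).injective
        (Subtype.coe_injective (e1.symm.trans e2))
      simpa using h3
    have hww : wperm i τ = wperm i τ' := Equiv.ext key
    calc τ = wperm i (wperm i τ) := (wperm_wperm τ).symm
      _ = wperm i (wperm i τ') := by rw [hww]
      _ = τ' := wperm_wperm τ'

lemma glue_surj (hin : i ≤ n) (π : Equiv.Perm (Fin n)) :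
    ∃ (A : Finset (Fin n)) (hA : A.card = i) (σ : Equiv.Perm (Fin i))
      (τ : Equiv.Perm (Fin (n - i))), glue A hA σ τ = π := by
  have hinj1 : Function.Injective (fun m : Fin i => π (Fin.castLE hin m)) :=
    fun a b hab => Fin.castLE_injective hin (π.injective hab)
  set A : Finset (Fin n) := Finset.image (fun m : Fin i => π (Fin.castLE hin m)) Finset.univ
    with hAdef
  have hA : A.card = i := by
    rw [hAdef, Finset.card_image_of_injective _ hinj1, Finset.card_univ, Fintype.card_fin]
  have hmemA : ∀ m : Fin i, π (Fin.castLE hin m) ∈ A := fun m =>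
    Finset.mem_image_of_mem _ (Finset.mem_univ m)
  have hlt : ∀ m : Fin (n - i), i + (m : ℕ) < n := fun m => by have := m.isLt; omega
  have hmemC : ∀ m : Fin (n - i), π ⟨i + (m : ℕ), hlt m⟩ ∈ Aᶜ := by
    intro m
    rw [Finset.mem_compl]
    intro hmem
    rw [hAdef, Finset.mem_image] at hmem
    obtain ⟨m', _, hm'⟩ := hmem
    have h4 := π.injective hm'
    have h5 : (Fin.castLE hin m' : ℕ) = i + (m : ℕ) := congrArg Fin.val h4
    simp only [Fin.coe_castLE] at h5
    have := m'.isLt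
    omega
  have hσinj : Function.Injective (fun m : Fin i =>
      (A.orderIsoOfFin hA).symm ⟨π (Fin.castLE hin m), hmemA m⟩) := by
    intro a b hab
    have h1 := (A.orderIsoOfFin hA).symm.injective hab
    have h2 : π (Fin.castLE hin a) = π (Fin.castLE hin b) := congrArg Subtype.val h1
    exact Fin.castLE_injective hin (π.injective h2)
  have hτinj : Function.Injective (fun m : Fin (n - i) =>
      (Aᶜ.orderIsoOfFin (card_compl' hA)).symm ⟨π ⟨i + (m : ℕ), hlt m⟩, hmemC m⟩) := by
    intro a b hab
    have h1 := (Aᶜ.orderIsoOfFin (card_compl' hA)).symm.injective hab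
    have h2 : π ⟨i + (a : ℕ), hlt a⟩ = π ⟨i + (b : ℕ), hlt b⟩ := congrArg Subtype.val h1
    have h3 := π.injective h2
    have h4 : i + (a : ℕ) = i + (b : ℕ) := congrArg Fin.val h3
    exact Fin.ext (by omega)
  refine ⟨A, hA,
    Equiv.ofBijective _ (Finite.injective_iff_bijective.mp hσinj),
    wperm i (Equiv.ofBijective _ (Finite.injective_iff_bijective.mp hτinj)), ?_⟩
  apply Equiv.ext
  intro m
  by_cases hm : (m : ℕ) < i
  · rw [glue_apply_lt' hA _ _ m hm]
    simp only [Equiv.ofBijective_apply, OrderIso.apply_symm_apply]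
    exact congrArg π (Fin.ext (by simp))
  · have hge : i ≤ (m : ℕ) := not_lt.mp hm
    have ha : (m : ℕ) - i < n - i := by have := m.isLt; omega
    rw [glue_apply_ge' hA _ _ m hge rfl ha, wperm_wperm]
    simp only [Equiv.ofBijective_apply, OrderIso.apply_symm_apply]
    exact congrArg π (Fin.ext (by simp; omega))


end Glue


lemma Ahat_card (m r : ℕ) :
    Ahat m (r + 1) =
      ((Finset.univ : Finset (Equiv.Perm (Fin m))).filter
        (fun σ => (altD σ).card = r)).card := by
  unfold Ahat
  congr 1
  apply Finset.filter_congr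
  intro x _
  constructor <;> (intro h; omega)

lemma innerSumQ (n k i : ℕ) :
    ∑ j ∈ Finset.range (k + 1), Ahat i (j + 1) * Ahat (n - i) (k - j + 1) =
      ((Finset.univ : Finset (Equiv.Perm (Fin i) × Equiv.Perm (Fin (n - i)))).filter
        (fun st => (altD st.1).card + (altD st.2).card = k)).card := by
  rw [Finset.card_eq_sum_card_fiberwise (f := fun st => (altD st.1).card)
    (t := Finset.range (k + 1))
    (fun x hx => by
      rw [Finset.mem_coe, Finset.mem_filter] at hx
      rw [Finset.mem_coe, Finset.mem_range]
      show (altD x.1).card < k + 1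
      omega)]
  apply Finset.sum_congr rfl
  intro j hj
  rw [Finset.mem_range] at hj
  rw [Finset.filter_filter]
  have h1 : (Finset.univ.filter fun (st : Equiv.Perm (Fin i) × Equiv.Perm (Fin (n - i))) =>
      ((altD st.1).card + (altD st.2).card = k) ∧ (altD st.1).card = j)
      = Finset.univ.filter (fun st => (altD st.1).card = j ∧ (altD st.2).card = k - j) := by
    apply Finset.filter_congr
    intro st _
    constructor <;> (rintro ⟨ha, hb⟩; constructor <;> omega)
  rw [h1, ← Finset.univ_product_univ,
    Finset.filter_product (fun σ => (altD σ).card = j) (fun τ => (altD τ).card = k - j),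
    Finset.card_product, Ahat_card, Ahat_card]

lemma count_p (n k : ℕ) (π : Equiv.Perm (Fin n)) :
    ((Finset.range (n + 1)).filter (fun p =>
        (altD π).card = k + (if 1 ≤ p ∧ p - 1 ∈ altD π then 1 else 0))).card
      = (if (altD π).card = k then n + 1 - k else 0)
        + (if (altD π).card = k + 1 then k + 1 else 0) := by
  have hsub : ∀ j ∈ altD π, j < n - 1 := by
    intro j hj
    unfold altD at hj
    rw [Finset.mem_filter, Finset.mem_range] at hj
    exact hj.1
  have hT : (Finset.range (n + 1)).filter (fun p => 1 ≤ p ∧ p - 1 ∈ altD π)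
      = (altD π).image (· + 1) := by
    ext p
    rw [Finset.mem_filter, Finset.mem_range, Finset.mem_image]
    constructor
    · rintro ⟨hp, hp1, hp2⟩
      exact ⟨p - 1, hp2, by omega⟩
    · rintro ⟨j, hj, rfl⟩
      have := hsub j hj
      refine ⟨by omega, by omega, by simpa using hj⟩
  have hTcard : ((Finset.range (n + 1)).filter (fun p => 1 ≤ p ∧ p - 1 ∈ altD π)).card
      = (altD π).card := by
    rw [hT, Finset.card_image_of_injective _ (add_left_injective 1)]
  have hsplit := Finset.card_filter_add_card_filter_not
    (s := Finset.range (n + 1)) (p := fun p => 1 ≤ p ∧ p - 1 ∈ altD π)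
  rw [Finset.card_range] at hsplit
  by_cases h1 : (altD π).card = k
  · rw [if_pos h1, if_neg (by omega)]
    have he : (Finset.range (n + 1)).filter (fun p =>
          (altD π).card = k + (if 1 ≤ p ∧ p - 1 ∈ altD π then 1 else 0))
        = (Finset.range (n + 1)).filter (fun p => ¬(1 ≤ p ∧ p - 1 ∈ altD π)) := by
      apply Finset.filter_congr
      intro p _
      split_ifs with hc
      · constructor
        · intro hh; omega
        · intro hh; exact absurd hc hh
      · constructor
        · intro _; exact hc
        · intro _; omega
    rw [he]
    omega
  · by_cases h2 : (altD π).card = k + 1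
    · rw [if_neg h1, if_pos h2]
      have he : (Finset.range (n + 1)).filter (fun p =>
            (altD π).card = k + (if 1 ≤ p ∧ p - 1 ∈ altD π then 1 else 0))
          = (Finset.range (n + 1)).filter (fun p => 1 ≤ p ∧ p - 1 ∈ altD π) := by
        apply Finset.filter_congr
        intro p _
        split_ifs with hc
        · constructor
          · intro _; exact hc
          · intro _; omega
        · constructor
          · intro hh; omega
          · intro hh; exact absurd hh hc
      rw [he]
      omega
    · rw [if_neg h1, if_neg h2]
      rw [show (Finset.range (n + 1)).filter (fun p =>
          (altD π).card = k + (if 1 ≤ p ∧ p - 1 ∈ altD π then 1 else 0)) = ∅ from ?_]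
      · simp
      · rw [Finset.eq_empty_iff_forall_notMem]
        intro p hp
        rw [Finset.mem_filter] at hp
        rcases hp with ⟨-, hp⟩
        split_ifs at hp <;> omega

lemma RHS_count (n k : ℕ) :
    (((Finset.univ : Finset (Equiv.Perm (Fin n))) ×ˢ Finset.range (n + 1)).filter
        (fun x => (altD x.1).card = k + (if 1 ≤ x.2 ∧ x.2 - 1 ∈ altD x.1 then 1 else 0))).card
      = (n + 1 - k) * Ahat n (k + 1) + (k + 1) * Ahat n (k + 2) := by
  rw [Finset.card_eq_sum_card_fiberwise (f := Prod.fst)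
    (t := (Finset.univ : Finset (Equiv.Perm (Fin n)))) (fun x _ => Finset.mem_univ _)]
  have step : ∀ π : Equiv.Perm (Fin n),
      ((((Finset.univ : Finset (Equiv.Perm (Fin n))) ×ˢ Finset.range (n + 1)).filter
        (fun x => (altD x.1).card = k + (if 1 ≤ x.2 ∧ x.2 - 1 ∈ altD x.1 then 1 else 0))).filter
        (fun x => x.1 = π)).card
      = (if (altD π).card = k then n + 1 - k else 0)
        + (if (altD π).card = k + 1 then k + 1 else 0) := by
    intro π
    rw [Finset.filter_filter]
    have h1 : ((Finset.univ : Finset (Equiv.Perm (Fin n))) ×ˢ Finset.range (n + 1)).filter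
        (fun x => ((altD x.1).card = k + (if 1 ≤ x.2 ∧ x.2 - 1 ∈ altD x.1 then 1 else 0))
          ∧ x.1 = π)
        = ((Finset.univ : Finset (Equiv.Perm (Fin n))) ×ˢ Finset.range (n + 1)).filter
        (fun x => x.1 = π ∧
          ((altD π).card = k + (if 1 ≤ x.2 ∧ x.2 - 1 ∈ altD π then 1 else 0))) := by
      apply Finset.filter_congr
      intro x _
      constructor
      · rintro ⟨ha, rfl⟩; exact ⟨rfl, ha⟩
      · rintro ⟨rfl, ha⟩; exact ⟨ha, rfl⟩
    rw [h1, Finset.filter_product (fun σ => σ = π)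
      (fun p => (altD π).card = k + (if 1 ≤ p ∧ p - 1 ∈ altD π then 1 else 0)),
      Finset.card_product, Finset.filter_eq', if_pos (Finset.mem_univ π),
      Finset.card_singleton, one_mul, count_p]
  rw [Finset.sum_congr rfl (fun π _ => step π), Finset.sum_add_distrib]
  have hs1 : ∑ π : Equiv.Perm (Fin n), (if (altD π).card = k then n + 1 - k else 0)
      = (n + 1 - k) * Ahat n (k + 1) := by
    rw [← Finset.sum_filter, Finset.sum_const_nat (fun x _ => rfl), Ahat_card, mul_comm]
  have hs2 : ∑ π : Equiv.Perm (Fin n), (if (altD π).card = k + 1 then k + 1 else 0)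
      = (k + 1) * Ahat n (k + 2) := by
    rw [← Finset.sum_filter, Finset.sum_const_nat (fun x _ => rfl), Ahat_card, mul_comm]
  rw [hs1, hs2]

lemma per_i (n k i : ℕ) (hin : i ≤ n) :
    ((Finset.powersetCard i (Finset.univ : Finset (Fin n))) ×ˢ
      ((Finset.univ : Finset (Equiv.Perm (Fin i) × Equiv.Perm (Fin (n - i)))).filter
        (fun st => (altD st.1).card + (altD st.2).card = k))).card
    = ((((Finset.univ : Finset (Equiv.Perm (Fin n))) ×ˢ Finset.range (n + 1)).filter
        (fun x => (altD x.1).card = k + (if 1 ≤ x.2 ∧ x.2 - 1 ∈ altD x.1 then 1 else 0))).filter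
        (fun x => x.2 = i)).card := by
  apply Finset.card_bij (fun a ha =>
    (Glue.glue a.1 (Finset.mem_powersetCard_univ.mp (Finset.mem_product.mp ha).1)
      a.2.1 a.2.2, i))
  · intro a ha
    have h2 := (Finset.mem_product.mp ha).2
    rw [Finset.mem_filter] at h2
    have hq := h2.2
    rw [Finset.mem_filter, Finset.mem_filter, Finset.mem_product, Finset.mem_range]
    refine ⟨⟨⟨Finset.mem_univ _, by omega⟩, ?_⟩, rfl⟩
    rw [Glue.altD_glue_card, hq]
  · intro a1 ha1 a2 ha2 heq
    rw [Prod.mk.injEq] at heq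
    obtain ⟨hg, -⟩ := heq
    obtain ⟨hA, hσ, hτ⟩ := Glue.glue_inj hg
    exact Prod.ext hA (Prod.ext hσ hτ)
  · intro b hb
    rw [Finset.mem_filter] at hb
    obtain ⟨hb1, hb2⟩ := hb
    rw [Finset.mem_filter] at hb1
    obtain ⟨-, hpred⟩ := hb1
    obtain ⟨A, hA, σ, τ, hglue⟩ := Glue.glue_surj hin b.1
    rw [hb2] at hpred
    have hd := Glue.altD_glue_card hA σ τ
    rw [hglue] at hd
    rw [hd] at hpred
    have hq : (altD σ).card + (altD τ).card = k := Nat.add_right_cancel hpred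
    refine ⟨(A, σ, τ), ?_, ?_⟩
    · rw [Finset.mem_product]
      exact ⟨Finset.mem_powersetCard_univ.mpr hA,
        Finset.mem_filter.mpr ⟨Finset.mem_univ _, hq⟩⟩
    · exact Prod.ext hglue hb2.symm

theorem stmt14 (n k : ℕ) (hkn : k ≤ n) :
    ∑ i ∈ Finset.range (n + 1), ∑ j ∈ Finset.range (k + 1),
        n.choose i * Ahat i (j + 1) * Ahat (n - i) (k - j + 1) =
      (n + 1 - k) * Ahat n (k + 1) + (k + 1) * Ahat n (k + 2) := by
  have hstep : ∀ i ∈ Finset.range (n + 1),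
      (∑ j ∈ Finset.range (k + 1),
        n.choose i * Ahat i (j + 1) * Ahat (n - i) (k - j + 1))
      = ((((Finset.univ : Finset (Equiv.Perm (Fin n))) ×ˢ Finset.range (n + 1)).filter
          (fun x => (altD x.1).card = k +
            (if 1 ≤ x.2 ∧ x.2 - 1 ∈ altD x.1 then 1 else 0))).filter
          (fun x => Prod.snd x = i)).card := by
    intro i hi
    rw [Finset.mem_range] at hi
    have h0 : (∑ j ∈ Finset.range (k + 1),
        n.choose i * Ahat i (j + 1) * Ahat (n - i) (k - j + 1))
        = n.choose i * ∑ j ∈ Finset.range (k + 1),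
            Ahat i (j + 1) * Ahat (n - i) (k - j + 1) := by
      rw [Finset.mul_sum]
      exact Finset.sum_congr rfl (fun j _ => mul_assoc _ _ _)
    rw [h0, innerSumQ]
    have hch : n.choose i = (Finset.powersetCard i (Finset.univ : Finset (Fin n))).card := by
      rw [Finset.card_powersetCard, Finset.card_univ, Fintype.card_fin]
    rw [hch, ← Finset.card_product]
    exact per_i n k i (by omega)
  rw [Finset.sum_congr rfl hstep]
  rw [← Finset.card_eq_sum_card_fiberwise (f := Prod.snd) (t := Finset.range (n + 1))
    (fun x hx => by
      have := (Finset.mem_product.mp (Finset.mem_filter.mp hx).1).2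
      exact this)]
  exact RHS_count n k
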